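/- arXiv:1509.01192 — 2 statements merged into one kernel-verified Lean document; each statement's English description precedes it below -/
import Mathlib

section
/- Let x, y, z be pairwise coprime integers, each at least 2, such that x divides y + z. Then the largest positive integer that is not expressible in the form a·x + b·y + c·z with a, b, c nonnegative integers equals max{ ⌊xz/(y+z)⌋ · y , ⌊xy/(y+z)⌋ · z } − x. -/
/-- Representability criterion: if `y + z = x k` and `m ≡ d·y (mod x)` with `d < x`,
then `m` is representable iff `d = 0` or `m ≥ min(d·y, (x-d)·z)`. -/
lemma stmt16_rep_iff (x y z k : ℕ) (hx : 0 < x) (hk : y + z = x * k)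
    (hxy : Nat.Coprime x y) (m d : ℕ) (hd : d < x)
    (hmd : (x : ℤ) ∣ (m : ℤ) - d * y) :
    (∃ a b c : ℕ, m = a * x + b * y + c * z) ↔
      (d = 0 ∨ min (d * y) ((x - d) * z) ≤ m) := by
  have hk' : (y : ℤ) + z = x * k := by exact_mod_cast hk
  have hcop : IsCoprime (x : ℤ) (y : ℤ) := by
    rw [Nat.isCoprime_iff_coprime]; exact hxy
  have hmd2 : (x : ℤ) ∣ (m : ℤ) - ((x : ℤ) - d) * z := by
    obtain ⟨t, ht⟩ := hmd
    exact ⟨t + d * k - z, by linear_combination ht + (d : ℤ) * hk'⟩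
  constructor
  · rintro ⟨a, b, c, rfl⟩
    rcases Nat.eq_zero_or_pos d with rfl | hd0
    · exact Or.inl rfl
    right
    rcases le_or_gt c b with hcb | hbc
    · have h1 : (x : ℤ) ∣ ((b : ℤ) - c - d) * y := by
        obtain ⟨t, ht⟩ := hmd
        refine ⟨t - a - c * k, ?_⟩
        push_cast at ht ⊢
        linear_combination ht - (c : ℤ) * hk'
      have h2 : (x : ℤ) ∣ (b : ℤ) - c - d := hcop.dvd_of_dvd_mul_right h1
      have h3 : d ≤ b - c := by
        by_contra hlt
        push_neg at hlt
        have hpos : (0 : ℤ) < (d : ℤ) - ((b : ℤ) - c) := by omega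
        have h4 : (x : ℤ) ∣ (d : ℤ) - ((b : ℤ) - c) := by
          have h5 : (x : ℤ) ∣ -((b : ℤ) - c - d) := (dvd_neg.mpr h2)
          convert h5 using 1; ring
        have := Int.le_of_dvd hpos h4
        omega
      calc min (d * y) ((x - d) * z) ≤ d * y := min_le_left _ _
        _ ≤ (b - c) * y := Nat.mul_le_mul_right _ h3
        _ ≤ b * y := Nat.mul_le_mul_right _ (Nat.sub_le _ _)
        _ ≤ a * x + b * y + c * z := by omega
    · have h1 : (x : ℤ) ∣ ((c : ℤ) - b + d) * y := by
        obtain ⟨t, ht⟩ := hmd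
        refine ⟨c * k + a - t, ?_⟩
        push_cast at ht ⊢
        linear_combination -ht + (c : ℤ) * hk'
      have h2 : (x : ℤ) ∣ (c : ℤ) - b + d := hcop.dvd_of_dvd_mul_right h1
      have hpos : (0 : ℤ) < (c : ℤ) - b + d := by omega
      have h3 := Int.le_of_dvd hpos h2
      have h4 : x - d ≤ c - b := by omega
      calc min (d * y) ((x - d) * z) ≤ (x - d) * z := min_le_right _ _
        _ ≤ (c - b) * z := Nat.mul_le_mul_right _ h4
        _ ≤ c * z := Nat.mul_le_mul_right _ (Nat.sub_le _ _)
        _ ≤ a * x + b * y + c * z := by omega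
  · rintro (rfl | hmin)
    · simp only [Nat.cast_zero, zero_mul, sub_zero] at hmd
      have : x ∣ m := by exact_mod_cast hmd
      exact ⟨m / x, 0, 0, by rw [Nat.div_mul_cancel this]; ring⟩
    · rcases le_total (d * y) ((x - d) * z) with h | h
      · rw [min_eq_left h] at hmin
        have hdvd : x ∣ m - d * y := by
          have : (x : ℤ) ∣ ((m - d * y : ℕ) : ℤ) := by
            rwa [Nat.cast_sub hmin, Nat.cast_mul]
          exact_mod_cast this
        obtain ⟨a, ha⟩ := hdvd
        exact ⟨a, d, 0, by rw [mul_comm x a] at ha; omega⟩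
      · rw [min_eq_right h] at hmin
        have hdvd : x ∣ m - (x - d) * z := by
          have : (x : ℤ) ∣ ((m - (x - d) * z : ℕ) : ℤ) := by
            rw [Nat.cast_sub hmin, Nat.cast_mul, Nat.cast_sub hd.le]
            exact hmd2
          exact_mod_cast this
        obtain ⟨a, ha⟩ := hdvd
        exact ⟨a, 0, x - d, by rw [mul_comm x a] at ha; omega⟩


/-- **Brauer–Shockley.** If `x, y, z ≥ 2` are pairwise coprime and
`x ∣ y + z`, then the Frobenius number of `x, y, z` (the largest positive integer not of
the form `ax + by + cz` with `a, b, c ≥ 0`) equals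
`max{⌊xz/(y+z)⌋·y, ⌊xy/(y+z)⌋·z} − x`. -/
theorem stmt16 (x y z : ℕ) (hx : 2 ≤ x) (hy : 2 ≤ y) (hz : 2 ≤ z)
    (hxy : Nat.Coprime x y) (hxz : Nat.Coprime x z) (hyz : Nat.Coprime y z)
    (hdvd : x ∣ y + z) :
    IsGreatest {m : ℤ | 0 < m ∧ ¬ ∃ a b c : ℕ,
        m = (a : ℤ) * x + (b : ℤ) * y + (c : ℤ) * z}
      (max (((x : ℤ) * z / ((y : ℤ) + z)) * y) (((x : ℤ) * y / ((y : ℤ) + z)) * z)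
        - (x : ℤ)) := by
  obtain ⟨k, hk⟩ := hdvd
  have hx0 : 0 < x := by omega
  have hs0 : 0 < y + z := by omega
  obtain ⟨d0, hd0def⟩ : ∃ d0 : ℕ, d0 = x * z / (y + z) := ⟨_, rfl⟩
  obtain ⟨e0, he0def⟩ : ∃ e0 : ℕ, e0 = x * y / (y + z) := ⟨_, rfl⟩
  have hk' : (y : ℤ) + z = x * k := by exact_mod_cast hk
  have hk0 : 0 < k := by
    rcases Nat.eq_zero_or_pos k with rfl | h
    · simp at hk; omega
    · exact h
  have hdiv1 : (x : ℤ) * z / ((y : ℤ) + z) = (d0 : ℤ) := by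
    rw [hd0def, Int.natCast_div]; push_cast; ring_nf
  have hdiv2 : (x : ℤ) * y / ((y : ℤ) + z) = (e0 : ℤ) := by
    rw [he0def, Int.natCast_div]; push_cast; ring_nf
  rw [hdiv1, hdiv2]
  obtain ⟨M, hMdef⟩ : ∃ M : ℕ, M = max (d0 * y) (e0 * z) := ⟨_, rfl⟩
  have hgoalM : (d0 : ℤ) * y ⊔ (e0 : ℤ) * z = (M : ℤ) := by
    rw [hMdef]; push_cast [Nat.cast_max]; rfl
  rw [hgoalM]
  -- basic bounds
  have hd0x : d0 < x := by
    rw [hd0def]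
    exact (Nat.div_lt_iff_lt_mul hs0).mpr (by nlinarith)
  have he0x : e0 < x := by
    rw [he0def]
    exact (Nat.div_lt_iff_lt_mul hs0).mpr (by nlinarith)
  have hle1 : d0 * y + d0 * z ≤ x * z := by
    have := Nat.div_mul_le_self (x * z) (y + z)
    rw [← hd0def, Nat.mul_add] at this; exact this
  have hle2 : e0 * y + e0 * z ≤ x * y := by
    have := Nat.div_mul_le_self (x * y) (y + z)
    rw [← he0def, Nat.mul_add] at this; exact this
  have hd0k : d0 = z / k := by
    rw [hd0def, hk, Nat.mul_div_mul_left _ _ hx0]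
  have he0k : e0 = y / k := by
    rw [he0def, hk, Nat.mul_div_mul_left _ _ hx0]
  have hkey : x ≤ d0 + e0 + 1 := by
    rw [hd0k, he0k]
    by_contra h
    push_neg at h
    have h1 := Nat.div_add_mod y k
    have h2 := Nat.div_add_mod z k
    have h3 : y % k < k := Nat.mod_lt _ hk0
    have h4 : z % k < k := Nat.mod_lt _ hk0
    have h5 : (z / k + y / k + 2) * k ≤ x * k := Nat.mul_le_mul_right k (by omega)
    have h6 : (z / k + y / k + 2) * k = k * (z / k) + k * (y / k) + 2 * k := by ring
    linarith [hk]
  have hcop : IsCoprime (x : ℤ) (y : ℤ) := by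
    rw [Nat.isCoprime_iff_coprime]; exact hxy
  -- `1` is in the set
  have h1S : (1 : ℤ) ∈ {m : ℤ | 0 < m ∧ ¬ ∃ a b c : ℕ,
      m = (a : ℤ) * x + (b : ℤ) * y + (c : ℤ) * z} := by
    refine ⟨one_pos, ?_⟩
    rintro ⟨a, b, c, habc⟩
    have h1 : (1 : ℕ) = a * x + b * y + c * z := by exact_mod_cast habc
    have ha : a = 0 := by
      by_contra h
      have : 2 ≤ a * x := le_trans hx (Nat.le_mul_of_pos_left x (Nat.pos_of_ne_zero h))
      omega
    have hb : b = 0 := by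
      by_contra h
      have : 2 ≤ b * y := le_trans hy (Nat.le_mul_of_pos_left y (Nat.pos_of_ne_zero h))
      omega
    have hc : c = 0 := by
      by_contra h
      have : 2 ≤ c * z := le_trans hz (Nat.le_mul_of_pos_left z (Nat.pos_of_ne_zero h))
      omega
    subst ha hb hc
    simp at h1
  -- upper bound
  have hub : ∀ m : ℤ, m ∈ {m : ℤ | 0 < m ∧ ¬ ∃ a b c : ℕ,
      m = (a : ℤ) * x + (b : ℤ) * y + (c : ℤ) * z} → m ≤ (M : ℤ) - x := by
    rintro m ⟨hm0, hnr⟩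
    by_contra hcon
    push_neg at hcon
    obtain ⟨n, hn⟩ : ∃ n : ℕ, (n : ℤ) = m := ⟨m.toNat, Int.toNat_of_nonneg hm0.le⟩
    obtain ⟨d, hdx, hmd⟩ : ∃ d : ℕ, d < x ∧ (x : ℤ) ∣ (n : ℤ) - d * y := by
      obtain ⟨u, v, huv⟩ := hcop
      have hxz0 : ((x : ℤ)) ≠ 0 := by exact_mod_cast hx0.ne'
      have h1 : 0 ≤ ((n : ℤ) * v) % x := Int.emod_nonneg _ hxz0
      have h2 : ((n : ℤ) * v) % x < x := Int.emod_lt_of_pos _ (by exact_mod_cast hx0)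
      refine ⟨(((n : ℤ) * v) % x).toNat, by omega, ?_⟩
      have hdd : ((((n : ℤ) * v) % x).toNat : ℤ) = ((n : ℤ) * v) % x :=
        Int.toNat_of_nonneg h1
      rw [hdd, Int.emod_def]
      exact ⟨(n : ℤ) * u + (((n : ℤ) * v) / x) * y,
        by linear_combination (-(n : ℤ)) * huv⟩
    have hmd2 : (x : ℤ) ∣ (n : ℤ) - ((x : ℤ) - d) * z := by
      obtain ⟨t, ht⟩ := hmd
      exact ⟨t + d * k - z, by linear_combination ht + (d : ℤ) * hk'⟩
    refine hnr ?_
    have hrep : ∃ a b c : ℕ, n = a * x + b * y + c * z := by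
      rw [stmt16_rep_iff x y z k hx0 hk hxy n d hdx hmd]
      rcases Nat.eq_zero_or_pos d with h | hd0
      · exact Or.inl h
      right
      by_contra hlt
      push_neg at hlt
      rcases le_or_gt d d0 with hdd0 | hdd0
      · have hw : d * y ≤ M := by
          rw [hMdef]; exact le_trans (Nat.mul_le_mul_right _ hdd0) (le_max_left _ _)
        have h1 : n < d * y := lt_of_lt_of_le hlt (min_le_left _ _)
        have h2 : (0 : ℤ) < (d : ℤ) * y - n := by
          have : ((d * y : ℕ) : ℤ) = (d : ℤ) * y := by push_cast; ring
          omega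
        have h3 : (x : ℤ) ∣ (d : ℤ) * y - n := (dvd_sub_comm).mp hmd
        have h4 := Int.le_of_dvd h2 h3
        have h5 : ((d * y : ℕ) : ℤ) ≤ (M : ℤ) := by exact_mod_cast hw
        have h6 : ((d * y : ℕ) : ℤ) = (d : ℤ) * y := by push_cast; ring
        omega
      · have hxd : x - d ≤ e0 := by omega
        have hw : (x - d) * z ≤ M := by
          rw [hMdef]; exact le_trans (Nat.mul_le_mul_right _ hxd) (le_max_right _ _)
        have h1 : n < (x - d) * z := lt_of_lt_of_le hlt (min_le_right _ _)
        have h6 : (((x - d) * z : ℕ) : ℤ) = ((x : ℤ) - d) * z := by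
          push_cast [Nat.cast_sub hdx.le]; ring
        have h2 : (0 : ℤ) < ((x : ℤ) - d) * z - n := by omega
        have h3 : (x : ℤ) ∣ ((x : ℤ) - d) * z - n := (dvd_sub_comm).mp hmd2
        have h4 := Int.le_of_dvd h2 h3
        have h5 : (((x - d) * z : ℕ) : ℤ) ≤ (M : ℤ) := by exact_mod_cast hw
        omega
    obtain ⟨a, b, c, habc⟩ := hrep
    exact ⟨a, b, c, by rw [← hn]; exact_mod_cast habc⟩
  have hMpos : (1 : ℤ) ≤ (M : ℤ) - x := hub 1 h1S
  constructor
  · refine ⟨by omega, ?_⟩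
    rintro ⟨a, b, c, habc⟩
    obtain ⟨n, hndef⟩ : ∃ n : ℕ, n = a * x + b * y + c * z := ⟨_, rfl⟩
    have hn : (n : ℤ) = (M : ℤ) - x := by rw [hndef]; push_cast; omega
    rcases le_total (e0 * z) (d0 * y) with hcase | hcase
    · have hMeq : M = d0 * y := by rw [hMdef]; exact max_eq_left hcase
      have hnx : n + x = d0 * y := by
        have : (n : ℤ) + x = ((d0 * y : ℕ) : ℤ) := by rw [hn, hMeq]; push_cast; ring
        exact_mod_cast this
      have hd00 : 0 < d0 := by
        rcases Nat.eq_zero_or_pos d0 with h | h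
        · rw [h] at hnx; simp at hnx; omega
        · exact h
      have hmd : (x : ℤ) ∣ (n : ℤ) - d0 * y := by
        refine ⟨-1, ?_⟩
        have h7 : (n : ℤ) + x = (d0 : ℤ) * y := by
          have : ((d0 * y : ℕ) : ℤ) = (d0 : ℤ) * y := by push_cast; ring
          omega
        linarith [h7]
      have := (stmt16_rep_iff x y z k hx0 hk hxy n d0 hd0x hmd).mp ⟨a, b, c, hndef⟩
      rcases this with h | h
      · omega
      · have hmin : min (d0 * y) ((x - d0) * z) = d0 * y := by
          apply min_eq_left
          have : (x - d0) * z = x * z - d0 * z := by rw [Nat.sub_mul]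
          omega
        rw [hmin] at h
        omega
    · have hMeq : M = e0 * z := by rw [hMdef]; exact max_eq_right hcase
      have hnx : n + x = e0 * z := by
        have : (n : ℤ) + x = ((e0 * z : ℕ) : ℤ) := by rw [hn, hMeq]; push_cast; ring
        exact_mod_cast this
      have he00 : 0 < e0 := by
        rcases Nat.eq_zero_or_pos e0 with h | h
        · rw [h] at hnx; simp at hnx; omega
        · exact h
      obtain ⟨d, hddef⟩ : ∃ d : ℕ, d = x - e0 := ⟨_, rfl⟩
      have hdx : d < x := by omega
      have hmd : (x : ℤ) ∣ (n : ℤ) - d * y := by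
        refine ⟨e0 * k - y - 1, ?_⟩
        have h7 : (n : ℤ) + x = (e0 : ℤ) * z := by
          have : ((e0 * z : ℕ) : ℤ) = (e0 : ℤ) * z := by push_cast; ring
          omega
        have h8 : (d : ℤ) = (x : ℤ) - e0 := by
          rw [hddef]; push_cast [Nat.cast_sub he0x.le]; ring
        rw [h8]
        linear_combination h7 + (e0 : ℤ) * hk'
      have := (stmt16_rep_iff x y z k hx0 hk hxy n d hdx hmd).mp ⟨a, b, c, hndef⟩
      rcases this with h | h
      · omega
      · have hxd : x - d = e0 := by omega
        have hmin : min (d * y) ((x - d) * z) = e0 * z := by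
          rw [hxd]
          apply min_eq_right
          have h9 : d * y = x * y - e0 * y := by rw [hddef, Nat.sub_mul]
          omega
        rw [hmin] at h
        omega
  · exact hub
end

section
/- Let (M, φ) be an F-crystal over k that is isoclinic of slope λ. For an integer q ≥ 1, let α_M(q) be the largest integer with φ^q(M) ⊆ p^{α_M(q)} M and β_M(q) the smallest integer with p^{β_M(q)} M ⊆ φ^q(M). Then for every q ≥ 1, either α_M(q) = β_M(q) = qλ (in particular qλ ∈ ℤ), or α_M(q) < qλ < β_M(q). -/
set_option linter.unusedSectionVars false
set_option maxHeartbeats 1000000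


open WittVector

section FCrystalDefs

variable (p : ℕ) [Fact p.Prime] (k : Type) [Field k] [IsAlgClosed k] [CharP k p]
variable (M : Type) [AddCommGroup M] [Module (WittVector p k) M]

/-- `(M, φ)` is an `F`-crystal over `k`: `M` is a finite free `W(k)`-module and `φ` is an
injective `σ`-semilinear additive map, where `σ` is the Witt vector Frobenius. -/
structure IsFCrystal (φ : M → M) : Prop where
  free : Module.Free (WittVector p k) M
  finite : Module.Finite (WittVector p k) M
  map_add : ∀ x y : M, φ (x + y) = φ x + φ y
  map_smul : ∀ (a : WittVector p k) (x : M), φ (a • x) = WittVector.frobenius a • φ x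
  injective : Function.Injective φ

variable (M' : Type) [AddCommGroup M'] [Module (WittVector p k) M']

/-- Isomorphism of `F`-crystals: a `W(k)`-linear bijection commuting with the Frobenii. -/
def FIso (φ : M → M) (φ' : M' → M') : Prop :=
  ∃ h : M ≃ₗ[WittVector p k] M', ∀ x : M, h (φ x) = φ' (h x)

/-- The isomorphism number `n_M` of the `F`-crystal `(M, φ)`: the smallest `n ≥ 0` such that
for every `W(k)`-linear automorphism `g` of `M` congruent to `id_M` modulo `p^n`, the
`F`-crystal `(M, g ∘ φ)` is isomorphic to `(M, φ)`. -/
noncomputable def isoNum (φ : M → M) : ℕ :=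
  sInf {n | ∀ g : M ≃ₗ[WittVector p k] M,
    (∀ x : M, ∃ y : M, g x - x = (p : WittVector p k) ^ n • y) →
    FIso p k M M (fun x => g (φ x)) φ}

/-- `(M, φ)` is isosimple: `M ≠ 0` and every `φ`-stable `W(k)`-submodule `N ⊆ M` with
`M/N` torsion-free is `0` or `M`. -/
def IsIsosimple (φ : M → M) : Prop :=
  Nontrivial M ∧ ∀ N : Submodule (WittVector p k) M,
    (∀ x ∈ N, φ x ∈ N) →
    (∀ (a : WittVector p k) (x : M), a ≠ 0 → a • x ∈ N → x ∈ N) →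
    N = ⊥ ∨ N = ⊤

/-- The submodule `φ(M)` of `M`. -/
noncomputable def phiImage (φ : M → M) : Submodule (WittVector p k) M :=
  Submodule.span (WittVector p k) (Set.range φ)

/-- The `W(k)`-module `Q` has length `s`, expressed via composition series. -/
def LengthEq (Q : Type) [AddCommGroup Q] [Module (WittVector p k) Q] (s : ℕ) : Prop :=
  ∃ c : CompositionSeries (Submodule (WittVector p k) Q),
    c.head = ⊥ ∧ c.last = ⊤ ∧ c.length = s

end FCrystalDefs

/-- `(M, φ)` is isoclinic of slope `l ≥ 0`. -/
def IsIsoclinic (p : ℕ) [Fact p.Prime] (k : Type) [Field k] [IsAlgClosed k] [CharP k p]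
    (M : Type) [AddCommGroup M] [Module (WittVector p k) M] (φ : M → M) (l : ℚ) : Prop :=
  0 ≤ l ∧ ∃ c : ℕ, ∀ q : ℕ, 1 ≤ q →
    (∀ x : M, ∃ y : M, (p : WittVector p k) ^ c • φ^[q] x =
      (p : WittVector p k) ^ ((⌈(q : ℚ) * l⌉).toNat) • y) ∧
    (∀ x : M, ∃ y : M, (p : WittVector p k) ^ ((⌈(q : ℚ) * l⌉).toNat + c) • x = φ^[q] y)

section Stmt18Aux
variable {p : ℕ} [Fact p.Prime] {k : Type} [Field k] [IsAlgClosed k] [CharP k p]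

/-- `m`-th iterate of the Witt vector Frobenius, as a ring hom. -/
noncomputable def frobW (p : ℕ) [Fact p.Prime] (k : Type) [Field k] [IsAlgClosed k]
    [CharP k p] (m : ℕ) : WittVector p k →+* WittVector p k :=
  (WittVector.frobenius : WittVector p k →+* WittVector p k) ^ m

lemma frobW_succ_apply (m : ℕ) (a : WittVector p k) :
    frobW p k (m+1) a = frobW p k m (WittVector.frobenius a) := by
  rw [frobW, pow_succ]; rfl

lemma frobW_p (m : ℕ) : frobW p k m (p : WittVector p k) = p := map_natCast _ p

lemma frobW_bijective (m : ℕ) : Function.Bijective (frobW p k m) := by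
  rw [frobW, RingHom.coe_pow]
  exact (WittVector.frobenius_bijective p k).iterate m

variable {M : Type} [AddCommGroup M] [Module (WittVector p k) M] {φ : M → M}

lemma IsFCrystal.iter_smul (hc : IsFCrystal p k M φ) (m : ℕ) (a : WittVector p k) (x : M) :
    φ^[m] (a • x) = frobW p k m a • φ^[m] x := by
  induction m generalizing a x with
  | zero => simp [frobW]
  | succ n ih =>
      rw [Function.iterate_succ_apply, Function.iterate_succ_apply, hc.map_smul,
        ih, frobW_succ_apply]

lemma IsFCrystal.iter_zero (hc : IsFCrystal p k M φ) (m : ℕ) : φ^[m] (0 : M) = 0 := by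
  have := hc.iter_smul m 0 0
  simpa using this

lemma IsFCrystal.iter_add (hc : IsFCrystal p k M φ) (m : ℕ) (x y : M) :
    φ^[m] (x + y) = φ^[m] x + φ^[m] y := by
  induction m generalizing x y with
  | zero => simp
  | succ n ih => rw [Function.iterate_succ_apply, Function.iterate_succ_apply,
      Function.iterate_succ_apply, hc.map_add, ih]

lemma IsFCrystal.iter_sum (hc : IsFCrystal p k M φ) (m : ℕ) {ι : Type*} (s : Finset ι)
    (f : ι → M) : φ^[m] (∑ i ∈ s, f i) = ∑ i ∈ s, φ^[m] (f i) := by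
  classical
  induction s using Finset.induction with
  | empty => simpa using hc.iter_zero m
  | @insert a s h ih => rw [Finset.sum_insert h, Finset.sum_insert h, hc.iter_add, ih]

variable {ι : Type} [Fintype ι] [DecidableEq ι]

/-- Matrix of `φ^[m]` in the basis `b`. -/
noncomputable def matOf (φ : M → M) (b : Module.Basis ι (WittVector p k) M) (m : ℕ) :
    Matrix ι ι (WittVector p k) :=
  Matrix.of fun i j => b.repr (φ^[m] (b j)) i

lemma IsFCrystal.iter_apply (hc : IsFCrystal p k M φ) (b : Module.Basis ι (WittVector p k) M)
    (m : ℕ) (x : M) :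
    φ^[m] x = ∑ i, (∑ j, matOf φ b m i j * frobW p k m (b.repr x j)) • b i := by
  conv_lhs => rw [← b.sum_repr x]
  rw [hc.iter_sum]
  have h1 : ∀ j, φ^[m] (b.repr x j • b j)
      = ∑ i, (matOf φ b m i j * frobW p k m (b.repr x j)) • b i := by
    intro j
    rw [hc.iter_smul]
    conv_lhs => rw [← b.sum_repr (φ^[m] (b j))]
    rw [Finset.smul_sum]
    refine Finset.sum_congr rfl fun i _ => ?_
    rw [smul_smul, mul_comm]
    rfl
  rw [Finset.sum_congr rfl fun j _ => h1 j, Finset.sum_comm]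
  refine Finset.sum_congr rfl fun i _ => ?_
  rw [Finset.sum_smul]

lemma IsFCrystal.repr_iter (hc : IsFCrystal p k M φ) (b : Module.Basis ι (WittVector p k) M)
    (m : ℕ) (x : M) (i : ι) :
    b.repr (φ^[m] x) i = ∑ j, matOf φ b m i j * frobW p k m (b.repr x j) := by
  conv_lhs => rw [hc.iter_apply b m x]
  exact congrFun (b.repr_sum_self _) i

lemma IsFCrystal.matOf_add (hc : IsFCrystal p k M φ) (b : Module.Basis ι (WittVector p k) M)
    (m n : ℕ) :
    matOf φ b (m + n) = matOf φ b m * (matOf φ b n).map (frobW p k m) := by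
  refine Matrix.ext fun i j => ?_
  rw [Matrix.mul_apply]
  show b.repr (φ^[m+n] (b j)) i = _
  rw [Function.iterate_add_apply, hc.repr_iter b m]
  rfl

end Stmt18Aux

section Stmt18Aux2
variable {p : ℕ} [Fact p.Prime] {k : Type} [Field k] [IsAlgClosed k] [CharP k p]
variable {M : Type} [AddCommGroup M] [Module (WittVector p k) M] {φ : M → M}
variable {ι : Type} [Fintype ι] [DecidableEq ι]

/-- From entrywise divisibility of the matrix, get `φ^[m] M ⊆ p^s M`. -/
lemma IsFCrystal.dvd_to_S (hc : IsFCrystal p k M φ) (b : Module.Basis ι (WittVector p k) M)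
    (m s : ℕ) (h : ∀ i j, (p : WittVector p k)^s ∣ matOf φ b m i j) :
    ∀ x : M, ∃ y : M, φ^[m] x = (p : WittVector p k)^s • y := by
  intro x
  choose B hB using h
  refine ⟨∑ i, (∑ j, B i j * frobW p k m (b.repr x j)) • b i, ?_⟩
  rw [hc.iter_apply b m x, Finset.smul_sum]
  refine Finset.sum_congr rfl fun i _ => ?_
  rw [smul_smul, Finset.mul_sum]
  refine congrArg (· • b i) (Finset.sum_congr rfl fun j _ => ?_)
  rw [hB, mul_assoc]

/-- From `φ^[m] M ⊆ p^s M`, get entrywise divisibility of the matrix. -/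
lemma IsFCrystal.S_to_dvd (hc : IsFCrystal p k M φ) (b : Module.Basis ι (WittVector p k) M)
    (m s : ℕ) (h : ∀ x : M, ∃ y : M, φ^[m] x = (p : WittVector p k)^s • y) :
    ∀ i j, (p : WittVector p k)^s ∣ matOf φ b m i j := by
  intro i j
  obtain ⟨y, hy⟩ := h (b j)
  refine ⟨b.repr y i, ?_⟩
  have := congrArg (fun z => b.repr z i) hy
  simpa [matOf] using this

/-- From `p^s M ⊆ φ^[m] M`, produce a right inverse matrix up to `p^s`. -/
lemma IsFCrystal.T_to_mat (hc : IsFCrystal p k M φ) (b : Module.Basis ι (WittVector p k) M)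
    (m s : ℕ) (h : ∀ x : M, ∃ y : M, (p : WittVector p k)^s • x = φ^[m] y) :
    ∃ C : Matrix ι ι (WittVector p k),
      matOf φ b m * C = (p : WittVector p k)^s • (1 : Matrix ι ι (WittVector p k)) := by
  choose y hy using fun j => h (b j)
  refine ⟨Matrix.of fun i j => frobW p k m (b.repr (y j) i), Matrix.ext fun i j => ?_⟩
  rw [Matrix.mul_apply]
  have h1 : b.repr ((p : WittVector p k)^s • b j) i
      = ∑ j', matOf φ b m i j' * frobW p k m (b.repr (y j) j') := by
    rw [hy j, hc.repr_iter b m]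
  have h2 : b.repr ((p : WittVector p k)^s • b j) i
      = (p : WittVector p k)^s * (if i = j then 1 else 0) := by
    simp [Module.Basis.repr_self, Finsupp.single_apply, eq_comm]
  simp only [Matrix.of_apply]
  rw [Matrix.smul_apply, Matrix.one_apply, ← h1, h2, smul_eq_mul]

/-- From a right inverse matrix up to `p^s`, get `p^s M ⊆ φ^[m] M`. -/
lemma IsFCrystal.mat_to_T (hc : IsFCrystal p k M φ) (b : Module.Basis ι (WittVector p k) M)
    (m s : ℕ) (C : Matrix ι ι (WittVector p k))
    (hC : matOf φ b m * C = (p : WittVector p k)^s • (1 : Matrix ι ι (WittVector p k))) :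
    ∀ x : M, ∃ y : M, (p : WittVector p k)^s • x = φ^[m] y := by
  intro x
  have hη : ∀ i, ∃ a, frobW p k m a = ∑ j, C i j * b.repr x j :=
    fun i => (frobW_bijective m).2 _
  choose η hη using hη
  refine ⟨∑ i, η i • b i, ?_⟩
  rw [hc.iter_apply b m]
  have hrepr : ∀ j, b.repr (∑ i, η i • b i) j = η j :=
    fun j => congrFun (b.repr_sum_self η) j
  conv_lhs => rw [← b.sum_repr x, Finset.smul_sum]
  refine Finset.sum_congr rfl fun i _ => ?_
  rw [smul_smul]
  refine congrArg (· • b i) ?_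
  calc (p : WittVector p k)^s * b.repr x i
      = ∑ j', ((p : WittVector p k)^s • (1 : Matrix ι ι (WittVector p k))) i j' * b.repr x j' := by
        simp [Matrix.smul_apply, Matrix.one_apply, ite_mul, Finset.sum_ite_eq, Finset.mem_univ]
    _ = ∑ j', (matOf φ b m * C) i j' * b.repr x j' := by rw [hC]
    _ = ∑ j', (∑ j, matOf φ b m i j * C j j') * b.repr x j' := by
        simp [Matrix.mul_apply]
    _ = ∑ j, matOf φ b m i j * ∑ j', C j j' * b.repr x j' := by
        simp only [Finset.sum_mul, Finset.mul_sum, mul_assoc]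
        rw [Finset.sum_comm]
    _ = ∑ j, matOf φ b m i j * frobW p k m (b.repr (∑ i, η i • b i) j) := by
        refine Finset.sum_congr rfl fun j _ => ?_
        rw [hrepr, hη]

end Stmt18Aux2

section Stmt18Aux3
variable {p : ℕ} [Fact p.Prime] {k : Type} [Field k] [IsAlgClosed k] [CharP k p]
variable {M : Type} [AddCommGroup M] [Module (WittVector p k) M] {φ : M → M}
variable {ι : Type} [Fintype ι] [DecidableEq ι]

lemma IsFCrystal.det_pow (hc : IsFCrystal p k M φ) (b : Module.Basis ι (WittVector p k) M)
    (q d : ℕ) (u : (WittVector p k)ˣ)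
    (hu : (matOf φ b q).det = u * (p : WittVector p k)^d) (n : ℕ) :
    ∃ v : (WittVector p k)ˣ,
      (matOf φ b ((n+1)*q)).det = v * (p : WittVector p k)^((n+1)*d) := by
  induction n with
  | zero => exact ⟨u, by simpa using hu⟩
  | succ n ih =>
      obtain ⟨v, hv⟩ := ih
      refine ⟨u * Units.map (frobW p k q).toMonoidHom v, ?_⟩
      have hsplit : (n+1+1)*q = q + (n+1)*q := by ring
      rw [hsplit, hc.matOf_add b q ((n+1)*q), Matrix.det_mul, ← RingHom.mapMatrix_apply, ← RingHom.map_det, hu, hv,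
        map_mul, map_pow, frobW_p]
      have hvv : (frobW p k q) (v : WittVector p k)
          = ((Units.map (frobW p k q).toMonoidHom v : (WittVector p k)ˣ) : WittVector p k) := rfl
      rw [hvv]
      push_cast
      ring

end Stmt18Aux3


/-- For an isoclinic `F`-crystal of slope `λ` and any `q ≥ 1`, letting
`α` be the largest integer with `φ^q(M) ⊆ p^α M` and `β` the smallest with
`p^β M ⊆ φ^q(M)`, either `α = β = qλ` (so `qλ ∈ ℤ`) or `α < qλ < β`. -/
theorem stmt18 (p : ℕ) [Fact p.Prime] (k : Type) [Field k] [IsAlgClosed k] [CharP k p]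
    (M : Type) [AddCommGroup M] [Module (WittVector p k) M] (φ : M → M)
    (hcrys : IsFCrystal p k M φ) (l : ℚ) (hiso : IsIsoclinic p k M φ l)
    (q : ℕ) (hq : 1 ≤ q) (α β : ℕ)
    (hα : IsGreatest {a : ℕ | ∀ x : M, ∃ y : M,
      φ^[q] x = (p : WittVector p k) ^ a • y} α)
    (hβ : IsLeast {b : ℕ | ∀ x : M, ∃ y : M,
      (p : WittVector p k) ^ b • x = φ^[q] y} β) :
    ((α : ℚ) = (q : ℚ) * l ∧ (β : ℚ) = (q : ℚ) * l) ∨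
    ((α : ℚ) < (q : ℚ) * l ∧ (q : ℚ) * l < (β : ℚ)) := by
  classical
  obtain ⟨hl0, c, hc⟩ := hiso
  haveI := hcrys.free
  haveI := hcrys.finite
  let ι := Module.Free.ChooseBasisIndex (WittVector p k) M
  let b : Module.Basis ι (WittVector p k) M := Module.Free.chooseBasis _ _
  by_cases hni : Nonempty ι
  swap
  · exfalso
    haveI : IsEmpty ι := not_nonempty_iff.mp hni
    have hz : ∀ x : M, x = 0 := fun x => by
      rw [← b.sum_repr x]; simp
    have hmem : α + 1 ∈ {a : ℕ | ∀ x : M, ∃ y : M,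
        φ^[q] x = (p : WittVector p k) ^ a • y} :=
      fun x => ⟨0, by rw [hz (φ^[q] x)]; simp⟩
    have := hα.2 hmem
    omega
  have hr : 0 < Fintype.card ι := Fintype.card_pos
  set r := Fintype.card ι with hrdef
  -- `p` facts
  have hp0 : (p : WittVector p k) ≠ 0 := WittVector.p_nonzero p k
  have hpu : ¬ IsUnit (p : WittVector p k) := (WittVector.irreducible p).not_isUnit
  have hdvd_le : ∀ a e : ℕ,
      (p : WittVector p k)^a ∣ (p : WittVector p k)^e → a ≤ e :=
    fun a e h => (pow_dvd_pow_iff hp0 hpu).mp h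
  -- the determinant is nonzero
  have hD0 : (matOf φ b q).det ≠ 0 := by
    intro h0
    obtain ⟨v, hv0, hv⟩ := Matrix.exists_mulVec_eq_zero_iff.mpr h0
    choose w hw using fun i => (frobW_bijective (p := p) (k := k) q).2 (v i)
    have hrw : ∀ j, b.repr (∑ i', w i' • b i') j = w j :=
      fun j => congrFun (b.repr_sum_self w) j
    have hx : φ^[q] (∑ i, w i • b i) = 0 := by
      rw [hcrys.iter_apply b q]
      have hco : ∀ i : ι,
          (∑ j, matOf φ b q i j * frobW p k q (b.repr (∑ i', w i' • b i') j)) = 0 := by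
        intro i
        calc ∑ j, matOf φ b q i j * frobW p k q (b.repr (∑ i', w i' • b i') j)
            = ∑ j, matOf φ b q i j * v j :=
              Finset.sum_congr rfl fun j _ => by rw [hrw j, hw j]
          _ = 0 := by simpa [Matrix.mulVec, dotProduct] using congrFun hv i
      have hz : ∀ i : ι,
          (∑ j, matOf φ b q i j * frobW p k q (b.repr (∑ i', w i' • b i') j)) • b i
            = (0 : M) := fun i => by rw [hco i, zero_smul]
      rw [Finset.sum_congr rfl fun i _ => hz i, Finset.sum_const, smul_zero]
    have hxz : (∑ i, w i • b i) = 0 :=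
      (hcrys.injective.iterate q) (by rw [hx, hcrys.iter_zero q])
    apply hv0
    funext i
    have hwi : w i = 0 := by
      have h := congrFun (b.repr_sum_self w) i
      rw [hxz] at h
      simpa using h.symm
    rw [Pi.zero_apply, ← hw i, hwi, map_zero]
  haveI : IsDiscreteValuationRing (WittVector p k) := WittVector.isDiscreteValuationRing
  obtain ⟨d, u, hu⟩ :=
    IsDiscreteValuationRing.eq_unit_mul_pow_irreducible hD0 (WittVector.irreducible p)
  have hDn := hcrys.det_pow b q d u hu
  -- key inequality 1
  have key1 : ∀ (n s c' : ℕ),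
      (∀ i j, (p : WittVector p k)^s ∣ (p : WittVector p k)^c' * matOf φ b ((n+1)*q) i j) →
      r * s ≤ r * c' + (n+1)*d := by
    intro n s c' h
    choose B hB using h
    obtain ⟨v, hv⟩ := hDn n
    have hmat : (p : WittVector p k)^c' • matOf φ b ((n+1)*q)
        = (p : WittVector p k)^s • Matrix.of B :=
      Matrix.ext fun i j => by simpa [smul_eq_mul] using hB i j
    have hdet := congrArg Matrix.det hmat
    rw [Matrix.det_smul, Matrix.det_smul, hv] at hdet
    have hdvd : (p : WittVector p k)^(r*s) ∣ (p : WittVector p k)^(r*c' + (n+1)*d) := by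
      rw [← Units.dvd_mul_left (u := v)]
      have h1 : (v : WittVector p k) * (p : WittVector p k)^(r*c' + (n+1)*d)
          = ((p : WittVector p k)^c')^r * ((v : WittVector p k)
            * (p : WittVector p k)^((n+1)*d)) := by
        rw [← pow_mul, mul_comm c' r, pow_add]; ring
      rw [h1, hdet, ← pow_mul, mul_comm s r]
      exact Dvd.intro _ rfl
    exact hdvd_le _ _ hdvd
  -- key inequality 2
  have key2 : ∀ (n s : ℕ),
      (∃ C : Matrix ι ι (WittVector p k), matOf φ b ((n+1)*q) * C
        = (p : WittVector p k)^s • (1 : Matrix ι ι (WittVector p k))) →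
      (n+1)*d ≤ r * s := by
    intro n s ⟨C, hC⟩
    obtain ⟨v, hv⟩ := hDn n
    have hdet := congrArg Matrix.det hC
    rw [Matrix.det_mul, hv, Matrix.det_smul, Matrix.det_one, mul_one, ← pow_mul,
      mul_comm s r] at hdet
    have hdvd : (p : WittVector p k)^((n+1)*d) ∣ (p : WittVector p k)^(r*s) := by
      rw [← hdet]
      exact dvd_mul_of_dvd_left (dvd_mul_left _ _) _
    exact hdvd_le _ _ hdvd
  -- the two isoclinic inequalities
  have hmq : ∀ n : ℕ, 1 ≤ (n+1)*q := fun n => Nat.one_le_iff_ne_zero.mpr (by positivity)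
  have hle1 : ∀ n : ℕ,
      r * (⌈(((n+1)*q : ℕ) : ℚ) * l⌉.toNat) ≤ r * c + (n+1)*d := by
    intro n
    refine key1 n _ c fun i j => ?_
    obtain ⟨y, hy⟩ := (hc ((n+1)*q) (hmq n)).1 (b j)
    refine ⟨b.repr y i, ?_⟩
    have h := congrArg (fun z => b.repr z i) hy
    simpa [matOf, smul_eq_mul] using h
  have hle2 : ∀ n : ℕ,
      (n+1)*d ≤ r * ((⌈(((n+1)*q : ℕ) : ℚ) * l⌉.toNat) + c) := by
    intro n
    exact key2 n _ (hcrys.T_to_mat b _ _ (hc ((n+1)*q) (hmq n)).2)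
  -- ceiling bounds
  have hceil : ∀ n : ℕ,
      (((n+1)*q : ℕ) : ℚ) * l ≤ ((⌈(((n+1)*q : ℕ) : ℚ) * l⌉.toNat : ℕ) : ℚ) ∧
      ((⌈(((n+1)*q : ℕ) : ℚ) * l⌉.toNat : ℕ) : ℚ) < (((n+1)*q : ℕ) : ℚ) * l + 1 := by
    intro n
    have hx0 : (0 : ℚ) ≤ (((n+1)*q : ℕ) : ℚ) * l := by positivity
    have hc0 : (0 : ℤ) ≤ ⌈(((n+1)*q : ℕ) : ℚ) * l⌉ := Int.ceil_nonneg hx0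
    have hcast : ((⌈(((n+1)*q : ℕ) : ℚ) * l⌉.toNat : ℕ) : ℚ)
        = ((⌈(((n+1)*q : ℕ) : ℚ) * l⌉ : ℤ) : ℚ) := by
      rw [← Int.toNat_of_nonneg hc0]
      push_cast [Int.toNat_of_nonneg hc0]
      rfl
    constructor
    · rw [hcast]; exact Int.le_ceil _
    · rw [hcast]
      exact Int.ceil_lt_add_one _
  -- conclude d = r * (q * l)
  have hrQ : (0 : ℚ) < (r : ℚ) := by exact_mod_cast hr
  have hdq : (d : ℚ) = (r : ℚ) * ((q : ℚ) * l) := by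
    by_contra hne
    have ht0 : (d : ℚ) - (r : ℚ) * ((q : ℚ) * l) ≠ 0 := sub_ne_zero.mpr hne
    set t : ℚ := (d : ℚ) - (r : ℚ) * ((q : ℚ) * l) with ht
    have htpos : 0 < |t| := abs_pos.mpr ht0
    obtain ⟨N, hN⟩ := exists_nat_gt (((r : ℚ) * c + r) / |t|)
    have hNt : (r : ℚ) * c + r < ((N : ℚ) + 1) * |t| := by
      have h1 : ((r : ℚ) * c + r) / |t| < (N : ℚ) + 1 := lt_of_lt_of_le hN (by linarith)
      calc (r : ℚ) * c + r = (((r : ℚ) * c + r) / |t|) * |t| := by field_simp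
        _ < ((N : ℚ) + 1) * |t| := mul_lt_mul_of_pos_right h1 htpos
    have h1 := hle1 N
    have h2 := hle2 N
    obtain ⟨hce1, hce2⟩ := hceil N
    set E : ℕ := ⌈(((N+1)*q : ℕ) : ℚ) * l⌉.toNat with hE
    have c1 : (r : ℚ) * (E : ℚ) ≤ (r : ℚ) * (c : ℚ) + ((N : ℚ) + 1) * (d : ℚ) := by
      exact_mod_cast h1
    have c2 : ((N : ℚ) + 1) * (d : ℚ) ≤ (r : ℚ) * ((E : ℚ) + (c : ℚ)) := by
      exact_mod_cast h2
    push_cast at hce1 hce2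
    have hr0 : (0 : ℚ) ≤ (r : ℚ) := le_of_lt hrQ
    have hmul1 := mul_le_mul_of_nonneg_left hce1 hr0
    have hmul2 := mul_lt_mul_of_pos_left hce2 hrQ
    have key : ((N : ℚ) + 1) * t
        = ((N : ℚ) + 1) * (d : ℚ) - (r : ℚ) * (((N : ℚ) + 1) * (q : ℚ) * l) := by
      rw [ht]; ring
    have habs : |((N : ℚ) + 1) * t| ≤ (r : ℚ) * c + r := by
      rw [abs_le]
      constructor
      · linarith [key, c1, hmul1]
      · linarith [key, c2, hmul2]
    have hfin : ((N : ℚ) + 1) * |t| ≤ (r : ℚ) * c + r := by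
      have hN0 : (0 : ℚ) ≤ (N : ℚ) + 1 := by positivity
      calc ((N : ℚ) + 1) * |t| = |((N : ℚ) + 1) * t| := by
            rw [abs_mul, abs_of_nonneg hN0]
        _ ≤ _ := habs
    linarith
  -- α ≤ q l
  have hαd : r * α ≤ d := by
    have hdvd := hcrys.S_to_dvd b q α hα.1
    have h := key1 0 α 0 (fun i j => by
      rw [show (0+1)*q = q from by ring]
      simpa using hdvd i j)
    simpa using h
  have hβd : d ≤ r * β := by
    have h := key2 0 β (by
      rw [show (0+1)*q = q from by ring]
      exact hcrys.T_to_mat b q β hβ.1)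
    simpa using h
  have hαq : (α : ℚ) ≤ (q : ℚ) * l := by
    have h1 : (r : ℚ) * α ≤ (r : ℚ) * ((q : ℚ) * l) := by
      rw [← hdq]; exact_mod_cast hαd
    exact le_of_mul_le_mul_left h1 hrQ
  have hβq : (q : ℚ) * l ≤ (β : ℚ) := by
    have h1 : (r : ℚ) * ((q : ℚ) * l) ≤ (r : ℚ) * β := by
      rw [← hdq]; exact_mod_cast hβd
    exact le_of_mul_le_mul_left h1 hrQ
  rcases eq_or_lt_of_le hαq with heq | hlt
  · left
    -- d = r * α
    have hda : d = r * α := by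
      have : (d : ℚ) = ((r * α : ℕ) : ℚ) := by
        rw [hdq, ← heq]; push_cast; ring
      exact_mod_cast this
    have hdvd := hcrys.S_to_dvd b q α hα.1
    choose B hB using hdvd
    have hmat : matOf φ b q = (p : WittVector p k)^α • Matrix.of B :=
      Matrix.ext fun i j => by simpa [smul_eq_mul] using hB i j
    have hdet : (u : WittVector p k) * (p : WittVector p k)^d
        = (p : WittVector p k)^d * (Matrix.of B).det := by
      rw [← hu, hmat, Matrix.det_smul, ← pow_mul, mul_comm α r, ← hda]
    have hBdet : (Matrix.of B).det = (u : WittVector p k) := by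
      have h1 : (p : WittVector p k)^d * (u : WittVector p k)
          = (p : WittVector p k)^d * (Matrix.of B).det := by rw [← hdet]; ring
      exact (mul_left_cancel₀ (pow_ne_zero _ hp0) h1).symm
    have hBu : IsUnit (Matrix.of B).det := hBdet ▸ u.isUnit
    have hABinv : matOf φ b q * (Matrix.of B)⁻¹
        = (p : WittVector p k)^α • (1 : Matrix ι ι (WittVector p k)) := by
      rw [hmat, Matrix.smul_mul, Matrix.mul_nonsing_inv _ hBu]
    have hmem : β ≤ α := hβ.2 (hcrys.mat_to_T b q α _ hABinv)
    have hβa : (β : ℚ) ≤ (α : ℚ) := by exact_mod_cast hmem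
    exact ⟨heq, le_antisymm (heq ▸ hβa) hβq⟩
  · right
    refine ⟨hlt, lt_of_le_of_ne hβq fun hbe => ?_⟩
    -- hbe : q * l = β
    have hdb : d = r * β := by
      have : (d : ℚ) = ((r * β : ℕ) : ℚ) := by
        rw [hdq, hbe]; push_cast; ring
      exact_mod_cast this
    obtain ⟨C, hC⟩ := hcrys.T_to_mat b q β hβ.1
    have hdet := congrArg Matrix.det hC
    rw [Matrix.det_mul, hu, Matrix.det_smul, Matrix.det_one, mul_one, ← pow_mul,
      mul_comm β r, ← hdb] at hdet
    have hCu : IsUnit C.det := by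
      have h1 : (p : WittVector p k)^d * ((u : WittVector p k) * C.det)
          = (p : WittVector p k)^d * 1 := by
        rw [mul_one]; linear_combination hdet
      have h2 := mul_left_cancel₀ (pow_ne_zero _ hp0) h1
      exact IsUnit.of_mul_eq_one _ (by rw [mul_comm] at h2; exact h2)
    have hAform : matOf φ b q = (p : WittVector p k)^β • C⁻¹ := by
      calc matOf φ b q = matOf φ b q * (C * C⁻¹) := by
            rw [Matrix.mul_nonsing_inv _ hCu, Matrix.mul_one]
        _ = (matOf φ b q * C) * C⁻¹ := by rw [Matrix.mul_assoc]
        _ = ((p : WittVector p k)^β • (1 : Matrix ι ι (WittVector p k))) * C⁻¹ := by rw [hC]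
        _ = (p : WittVector p k)^β • C⁻¹ := by rw [Matrix.smul_mul, Matrix.one_mul]
    have hmem : β ≤ α := hα.2 (hcrys.dvd_to_S b q β (fun i j =>
      ⟨C⁻¹ i j, by rw [hAform]; simp [smul_eq_mul]⟩))
    have hβa : (β : ℚ) ≤ (α : ℚ) := by exact_mod_cast hmem
    rw [← hbe] at hβa
    linarith
end
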